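/- For every finite simple graph G, the pseudoarboricity and arboricity satisfy p(G) ≤ Γ(G) ≤ p(G) + 1. -/

import Mathlib

open SimpleGraph

/-- An edge set spans a forest if the graph it spans contains no cycle. -/
def IsForestSet {V : Type*} (F : Set (Sym2 V)) : Prop :=
  (SimpleGraph.fromEdgeSet F).IsAcyclic

/-- A simple graph is a pseudoforest if every connected component contains at most one
cycle, i.e., any two cycles lying in the same connected component have the same edges. -/
def GraphIsPseudoforest {V : Type*} (H : SimpleGraph V) : Prop :=
  ∀ ⦃u v : V⦄ (c : H.Walk u u) (d : H.Walk v v),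
    c.IsCycle → d.IsCycle → H.Reachable u v → ∀ e : Sym2 V, e ∈ c.edges ↔ e ∈ d.edges

/-- An edge set is a pseudoforest if every connected component of the graph it spans
contains at most one cycle. -/
def IsPseudoforestSet {V : Type*} (P : Set (Sym2 V)) : Prop :=
  GraphIsPseudoforest (SimpleGraph.fromEdgeSet P)

/-- A partition of the edge set of `G` into `k` forests. -/
def IsForestPartition {V : Type*} (G : SimpleGraph V) (k : ℕ)
    (F : Fin k → Set (Sym2 V)) : Prop :=
  (∀ i, IsForestSet (F i)) ∧ (Pairwise fun i j => Disjoint (F i) (F j)) ∧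
    (⋃ i, F i) = G.edgeSet

/-- A partition of the edge set of `G` into `k` pseudoforests. -/
def IsPseudoforestPartition {V : Type*} (G : SimpleGraph V) (k : ℕ)
    (P : Fin k → Set (Sym2 V)) : Prop :=
  (∀ i, IsPseudoforestSet (P i)) ∧ (Pairwise fun i j => Disjoint (P i) (P j)) ∧
    (⋃ i, P i) = G.edgeSet

/-- The arboricity of `G`: the minimum number of forests that the edge set of `G` can
be partitioned into. -/
noncomputable def arboricity {V : Type*} (G : SimpleGraph V) : ℕ :=
  sInf {k | ∃ F : Fin k → Set (Sym2 V), IsForestPartition G k F}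

/-- The pseudoarboricity of `G`: the minimum number of pseudoforests that the edge set
of `G` can be partitioned into. -/
noncomputable def pseudoarboricity {V : Type*} (G : SimpleGraph V) : ℕ :=
  sInf {k | ∃ P : Fin k → Set (Sym2 V), IsPseudoforestPartition G k P}

namespace NWAux

attribute [local instance] Classical.propDecidable

variable {V : Type*}

/-- crossing predicate for a vertex set -/
def cross (S : Set V) (f : Sym2 V) : Prop :=
  Sym2.lift ⟨fun a b => Xor' (a ∈ S) (b ∈ S), fun a b => by simp [Xor', xor_comm]⟩ f

@[simp] lemma cross_mk (S : Set V) (a b : V) :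
    cross S s(a, b) ↔ Xor' (a ∈ S) (b ∈ S) := by
  simp [cross]

lemma parity_walk {G : SimpleGraph V} (S : Set V) {u v : V} (w : G.Walk u v) :
    Even ((w.edges.filter (fun f => cross S f)).length) ↔ ((u ∈ S) ↔ (v ∈ S)) := by
  induction w with
  | nil => simp
  | @cons a b c h q ih =>
    rw [Walk.edges_cons, List.filter_cons]
    by_cases hc : cross S s(a, b)
    · simp only [hc, if_pos, decide_eq_true_eq, List.length_cons]
      rw [Nat.even_add_one, ih]
      rw [cross_mk] at hc
      simp only [Xor', xor_iff_not_iff] at hc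
      tauto
    · simp only [hc, decide_eq_true_eq, if_neg, ih]
      rw [cross_mk] at hc
      simp [Xor'] at hc
      tauto


lemma single_cross_false {G : SimpleGraph V} (S : Set V) {u : V} (w : G.Walk u u)
    (hnd : w.edges.Nodup) {f0 : Sym2 V} (hf0 : f0 ∈ w.edges) (hc : cross S f0)
    (hall : ∀ f ∈ w.edges, cross S f → f = f0) : False := by
  have h1 : Even ((w.edges.filter (fun f => cross S f)).length) :=
    (parity_walk S w).2 Iff.rfl
  have hmem : f0 ∈ w.edges.filter (fun f => cross S f) := by
    simp [List.mem_filter, hf0, hc]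
  have hnd' : (w.edges.filter (fun f => cross S f)).Nodup := hnd.filter _
  have hall' : ∀ f ∈ w.edges.filter (fun f => cross S f), f = f0 := by
    intro f hf
    rw [List.mem_filter] at hf
    exact hall f hf.1 (by simpa using hf.2)
  rcases hl : w.edges.filter (fun f => cross S f) with _ | ⟨a, _ | ⟨b, t⟩⟩
  · rw [hl] at hmem; simp at hmem
  · rw [hl] at h1; simp at h1
  · rw [hl] at hnd' hall'
    have ha := hall' a (by simp)
    have hb := hall' b (by simp)
    subst ha
    rw [List.nodup_cons] at hnd'
    exact hnd'.1 (by simp [hb])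

/-- if every edge of A has its endpoints reachable in B, then A-reachability implies
B-reachability -/
lemma reach_of_edges_reach {A B : SimpleGraph V}
    (h : ∀ a b, A.Adj a b → B.Reachable a b) {u v : V} (hr : A.Reachable u v) :
    B.Reachable u v := by
  obtain ⟨w⟩ := hr
  induction w with
  | nil => exact Reachable.refl _
  | cons h' q ih => exact (h _ _ h').trans ih

lemma mem_of_reach_closed {A : SimpleGraph V} (S : Set V)
    (hcl : ∀ a b, A.Adj a b → (a ∈ S ↔ b ∈ S)) {u v : V} (hr : A.Reachable u v)
    (hu : u ∈ S) : v ∈ S := by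
  obtain ⟨w⟩ := hr
  induction w with
  | nil => exact hu
  | cons h' q ih => exact ih ((hcl _ _ h').1 hu)

lemma not_cross_of_reach {A : SimpleGraph V} {root : V}
    {a b : V} (hr : A.Reachable a b) :
    ¬ cross {v | A.Reachable root v} s(a, b) := by
  rw [cross_mk]
  simp only [Xor']
  intro h
  simp only [Set.mem_setOf_eq] at h
  rcases h with ⟨h1, h2⟩ | ⟨h1, h2⟩
  · exact h2 (h1.trans hr)
  · exact h2 (h1.trans hr.symm)

/-- acyclicity is inherited by subsets of edge sets -/
lemma acyclic_subset {A B : Set (Sym2 V)} (hAB : A ⊆ B)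
    (hB : (fromEdgeSet B).IsAcyclic) : (fromEdgeSet A).IsAcyclic := by
  intro v c hc
  have hE : ∀ f ∈ c.edges, f ∈ (fromEdgeSet B).edgeSet := by
    intro f hf
    have := c.edges_subset_edgeSet hf
    rw [edgeSet_fromEdgeSet] at this ⊢
    exact ⟨hAB this.1, this.2⟩
  exact hB (c.transfer _ hE) (hc.transfer hE)

/-- pseudoforest property is inherited by subsets -/
lemma pseudo_subset {A B : Set (Sym2 V)} (hAB : A ⊆ B)
    (hB : IsPseudoforestSet B) : IsPseudoforestSet A := by
  intro u v c d hc hd hr f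
  have hEc : ∀ f ∈ c.edges, f ∈ (fromEdgeSet B).edgeSet := by
    intro f hf
    have := c.edges_subset_edgeSet hf
    rw [edgeSet_fromEdgeSet] at this ⊢
    exact ⟨hAB this.1, this.2⟩
  have hEd : ∀ f ∈ d.edges, f ∈ (fromEdgeSet B).edgeSet := by
    intro f hf
    have := d.edges_subset_edgeSet hf
    rw [edgeSet_fromEdgeSet] at this ⊢
    exact ⟨hAB this.1, this.2⟩
  have := hB (c.transfer _ hEc) (d.transfer _ hEd) (hc.transfer hEc) (hd.transfer hEd)
    (hr.mono (fromEdgeSet_mono hAB)) f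
  rwa [Walk.edges_transfer, Walk.edges_transfer] at this


/-- Lower bound: a graph connecting all of `U` to `root` needs at least `|U| - 1` edges. -/
lemma card_le_conn [DecidableEq V] (T : Finset (Sym2 V)) (U : Finset V)
    (hin : ∀ f ∈ T, ∀ v ∈ f, v ∈ U) (root : V) (hroot : root ∈ U)
    (hconn : ∀ v ∈ U, (fromEdgeSet (T : Set (Sym2 V))).Reachable root v) :
    U.card ≤ T.card + 1 := by
  set H := fromEdgeSet (T : Set (Sym2 V)) with hH
  have key : ∀ v ∈ U, v ≠ root → ∃ b, H.Adj v b ∧ H.dist b root < H.dist v root := by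
    intro v hv hvr
    have hr : H.Reachable v root := (hconn v hv).symm
    obtain ⟨w, hw⟩ := hr.exists_walk_length_eq_dist
    have hpos : 0 < H.dist v root := hr.pos_dist_of_ne hvr
    cases w with
    | nil => rw [Walk.length_nil] at hw; omega
    | cons h q =>
      refine ⟨_, h, ?_⟩
      have : H.dist _ root ≤ q.length := dist_le q
      rw [Walk.length_cons] at hw
      omega
  classical
  set f : V → Sym2 V := fun v =>
    if h : v ∈ U ∧ v ≠ root then s(v, Classical.choose (key v h.1 h.2)) else s(v, v) with hf
  have hmaps : ∀ v ∈ U.erase root, f v ∈ T := by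
    intro v hv
    rw [Finset.mem_erase] at hv
    have h : v ∈ U ∧ v ≠ root := ⟨hv.2, hv.1⟩
    have hspec := Classical.choose_spec (key v h.1 h.2)
    have hfv : f v = s(v, Classical.choose (key v h.1 h.2)) := dif_pos h
    have : f v ∈ H.edgeSet := by
      rw [hfv]
      exact hspec.1
    rw [hH, edgeSet_fromEdgeSet] at this
    exact this.1
  have hinj : Set.InjOn f (U.erase root) := by
    intro v hv v' hv' heq
    by_contra hne
    rw [Finset.coe_erase, Set.mem_diff] at hv hv'
    simp only [Set.mem_singleton_iff] at hv hv'
    have h : v ∈ U ∧ v ≠ root := ⟨hv.1, hv.2⟩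
    have h' : v' ∈ U ∧ v' ≠ root := ⟨hv'.1, hv'.2⟩
    have hspec := Classical.choose_spec (key v h.1 h.2)
    have hspec' := Classical.choose_spec (key v' h'.1 h'.2)
    have hfv : f v = s(v, Classical.choose (key v h.1 h.2)) := dif_pos h
    have hfv' : f v' = s(v', Classical.choose (key v' h'.1 h'.2)) := dif_pos h'
    rw [hfv, hfv', Sym2.eq_iff] at heq
    rcases heq with ⟨h1, h2⟩ | ⟨h1, h2⟩
    · exact hne h1
    · rw [← h1] at hspec'
      rw [h2] at hspec
      omega
  have := Finset.card_le_card_of_injOn f hmaps hinj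
  rw [Finset.card_erase_of_mem hroot] at this
  omega


lemma sym2_exists (f : Sym2 V) : ∃ a b : V, f = s(a, b) :=
  Sym2.inductionOn f (fun a b => ⟨a, b, rfl⟩)

lemma reach_in_filter [DecidableEq V] (T : Finset (Sym2 V)) (S : Set V)
    (hcl : ∀ a b : V, (fromEdgeSet (T : Set (Sym2 V))).Adj a b → (a ∈ S ↔ b ∈ S)) :
    ∀ {u v : V}, (fromEdgeSet (T : Set (Sym2 V))).Walk u v → u ∈ S →
    (fromEdgeSet ((T.filter (fun g => ∀ x ∈ g, x ∈ S)) : Set (Sym2 V))).Reachable u v := by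
  intro u v w
  induction w with
  | nil => exact fun _ => Reachable.refl _
  | @cons a b c h q ih =>
    intro ha
    have hb : b ∈ S := (hcl a b h).1 ha
    rw [fromEdgeSet_adj] at h
    have hadj : (fromEdgeSet ((T.filter (fun g => ∀ x ∈ g, x ∈ S)) : Set (Sym2 V))).Adj a b := by
      rw [fromEdgeSet_adj]
      refine ⟨?_, h.2⟩
      simp only [Finset.coe_filter, Set.mem_setOf_eq]
      refine ⟨h.1, ?_⟩
      intro x hx
      rw [Sym2.mem_iff] at hx
      rcases hx with rfl | rfl
      exacts [ha, hb]
    exact hadj.reachable.trans (ih hb)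

/-- Upper bound: an acyclic graph spanning `U` connectedly has at most `|U| - 1` edges. -/
lemma card_le_acyclic [DecidableEq V] :
    ∀ (n : ℕ) (T : Finset (Sym2 V)) (U : Finset V) (root : V), T.card = n →
    (fromEdgeSet (T : Set (Sym2 V))).IsAcyclic →
    (∀ f ∈ T, ¬ f.IsDiag) →
    (∀ f ∈ T, ∀ v ∈ f, v ∈ U) →
    root ∈ U →
    (∀ v ∈ U, (fromEdgeSet (T : Set (Sym2 V))).Reachable root v) →
    T.card + 1 ≤ U.card := by
  intro n
  induction n using Nat.strong_induction_on with
  | _ n IH =>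
  intro T U root hcard hac hnd hin hroot hconn
  rcases T.eq_empty_or_nonempty with rfl | ⟨f, hfT⟩
  · simpa using Finset.card_pos.2 ⟨root, hroot⟩
  obtain ⟨α, β, rfl⟩ := sym2_exists f
  have hαβ : α ≠ β := fun h => hnd _ hfT (Sym2.mk_isDiag_iff.2 h)
  have hadj : (fromEdgeSet (T : Set (Sym2 V))).Adj α β :=
    (fromEdgeSet_adj _).2 ⟨hfT, hαβ⟩
  have hbr : (fromEdgeSet (T : Set (Sym2 V))).IsBridge s(α, β) :=
    isAcyclic_iff_forall_edge_isBridge.mp hac (by rw [mem_edgeSet]; exact hadj)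
  have hnb := isBridge_iff.mp hbr
  set T' : Finset (Sym2 V) := T.erase s(α, β) with hT'
  have hle : fromEdgeSet (T' : Set (Sym2 V)) ≤
      fromEdgeSet (T : Set (Sym2 V)) \ fromEdgeSet {s(α, β)} := by
    intro a b hab
    rw [fromEdgeSet_adj] at hab
    rw [hT'] at hab
    simp only [Finset.coe_erase, Set.mem_diff, Set.mem_singleton_iff] at hab
    refine ⟨(fromEdgeSet_adj _).2 ⟨hab.1.1, hab.2⟩, ?_⟩
    rw [fromEdgeSet_adj]
    rintro ⟨hmem, -⟩
    exact hab.1.2 hmem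
  have hnreach : ¬ (fromEdgeSet (T' : Set (Sym2 V))).Reachable α β :=
    fun h => hnb (h.mono hle)
  set S : Set V := {v | (fromEdgeSet (T' : Set (Sym2 V))).Reachable α v} with hS
  set Sc : Set V := {v | v ∉ S} with hSc
  have hcl : ∀ a b : V, (fromEdgeSet (T' : Set (Sym2 V))).Adj a b → (a ∈ S ↔ b ∈ S) :=
    fun a b hab => ⟨fun ha => ha.trans hab.reachable, fun hb => hb.trans hab.symm.reachable⟩
  have hclc : ∀ a b : V, (fromEdgeSet (T' : Set (Sym2 V))).Adj a b → (a ∈ Sc ↔ b ∈ Sc) := by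
    intro a b hab
    have := hcl a b hab
    simp only [hSc, Set.mem_setOf_eq]
    tauto
  set T₁ : Finset (Sym2 V) := T'.filter (fun g => ∀ x ∈ g, x ∈ S) with hT₁
  set T₂ : Finset (Sym2 V) := T'.filter (fun g => ∀ x ∈ g, x ∈ Sc) with hT₂
  set U₁ : Finset V := U.filter (fun v => v ∈ S) with hU₁
  set U₂ : Finset V := U.filter (fun v => ¬ v ∈ S) with hU₂
  have hT'T : (T' : Set (Sym2 V)) ⊆ (T : Set (Sym2 V)) := by
    rw [hT']
    simp only [Finset.coe_erase]
    exact Set.diff_subset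
  have hαU : α ∈ U := hin _ hfT α (Sym2.mem_mk_left α β)
  have hβU : β ∈ U := hin _ hfT β (Sym2.mem_mk_right α β)
  -- part 1
  have h1 : T₁.card + 1 ≤ U₁.card := by
    refine IH T₁.card ?_ T₁ U₁ α rfl (acyclic_subset (Set.Subset.trans
      (Finset.coe_subset.2 (Finset.filter_subset _ _)) hT'T) hac) ?_ ?_ ?_ ?_
    · calc T₁.card ≤ T'.card := Finset.card_le_card (Finset.filter_subset _ _)
        _ < T.card := Finset.card_erase_lt_of_mem hfT
        _ = n := hcard
    · intro g hg
      exact hnd g (hT'T (Finset.filter_subset _ _ hg))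
    · intro g hg x hx
      rw [hT₁, Finset.mem_filter] at hg
      rw [hU₁, Finset.mem_filter]
      exact ⟨hin g (hT'T hg.1) x hx, hg.2 x hx⟩
    · rw [hU₁, Finset.mem_filter]
      exact ⟨hαU, Reachable.refl _⟩
    · intro v hv
      rw [hU₁, Finset.mem_filter] at hv
      obtain ⟨w⟩ := hv.2
      exact reach_in_filter T' S hcl w (Reachable.refl _)
  -- part 2
  have h2 : T₂.card + 1 ≤ U₂.card := by
    have hβS : β ∉ S := hnreach
    have hreachβ : ∀ v ∈ U, v ∉ S → (fromEdgeSet (T' : Set (Sym2 V))).Reachable β v := by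
      intro v hv hvS
      set S' : Set V := {x | (fromEdgeSet (T' : Set (Sym2 V))).Reachable v x} with hS'
      have hαS' : α ∉ S' := fun h => hvS h.symm
      by_contra hβv
      have hβS' : β ∉ S' := fun h => hβv h.symm
      have hclosed : ∀ a b : V, (fromEdgeSet (T : Set (Sym2 V))).Adj a b → (a ∈ S' ↔ b ∈ S') := by
        intro a b hab
        rw [fromEdgeSet_adj] at hab
        by_cases he : s(a, b) = s(α, β)
        · rw [Sym2.eq_iff] at he
          rcases he with ⟨rfl, rfl⟩ | ⟨rfl, rfl⟩
          · simp [hαS', hβS']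
          · simp [hαS', hβS']
        · have : (fromEdgeSet (T' : Set (Sym2 V))).Adj a b := by
            rw [fromEdgeSet_adj]
            refine ⟨?_, hab.2⟩
            rw [hT']
            simp only [Finset.coe_erase, Set.mem_diff, Set.mem_singleton_iff]
            exact ⟨hab.1, he⟩
          exact ⟨fun h => h.trans this.reachable, fun h => h.trans this.symm.reachable⟩
      have hrootS' : root ∈ S' :=
        mem_of_reach_closed S' hclosed (hconn v hv).symm (Reachable.refl _)
      exact hαS' (mem_of_reach_closed S' hclosed (hconn α hαU) hrootS')
    refine IH T₂.card ?_ T₂ U₂ β rfl (acyclic_subset (Set.Subset.trans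
      (Finset.coe_subset.2 (Finset.filter_subset _ _)) hT'T) hac) ?_ ?_ ?_ ?_
    · calc T₂.card ≤ T'.card := Finset.card_le_card (Finset.filter_subset _ _)
        _ < T.card := Finset.card_erase_lt_of_mem hfT
        _ = n := hcard
    · intro g hg
      exact hnd g (hT'T (Finset.filter_subset _ _ hg))
    · intro g hg x hx
      rw [hT₂, Finset.mem_filter] at hg
      rw [hU₂, Finset.mem_filter]
      refine ⟨hin g (hT'T hg.1) x hx, hg.2 x hx⟩
    · rw [hU₂, Finset.mem_filter]
      exact ⟨hβU, hβS⟩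
    · intro v hv
      rw [hU₂, Finset.mem_filter] at hv
      obtain ⟨w⟩ := hreachβ v hv.1 hv.2
      exact reach_in_filter T' Sc hclc w hβS
  -- combine
  have hsplit : T₂ = T'.filter (fun g => ¬ (∀ x ∈ g, x ∈ S)) := by
    ext g
    rw [hT₂, Finset.mem_filter, Finset.mem_filter]
    constructor
    · rintro ⟨hg, hall⟩
      refine ⟨hg, fun hall' => ?_⟩
      obtain ⟨a, b, rfl⟩ := sym2_exists g
      exact hall a (Sym2.mem_mk_left a b) (hall' a (Sym2.mem_mk_left a b))
    · rintro ⟨hg, hnall⟩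
      refine ⟨hg, ?_⟩
      obtain ⟨a, b, rfl⟩ := sym2_exists g
      have hab : a ≠ b := fun h => hnd _ (hT'T hg) (Sym2.mk_isDiag_iff.2 h)
      have hadj' : (fromEdgeSet (T' : Set (Sym2 V))).Adj a b := (fromEdgeSet_adj _).2 ⟨hg, hab⟩
      have hiff := hcl a b hadj'
      intro x hx
      rw [Sym2.mem_iff] at hx
      have hna : a ∉ S := by
        intro haS
        refine hnall ?_
        intro x hx
        rw [Sym2.mem_iff] at hx
        rcases hx with rfl | rfl
        exacts [haS, hiff.1 haS]
      rcases hx with rfl | rfl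
      · exact hna
      · exact fun hbS => hna (hiff.2 hbS)
  have hcards : T₁.card + T₂.card = T'.card := by
    rw [hsplit, hT₁]
    exact Finset.card_filter_add_card_filter_not _
  have hUcards : U₁.card + U₂.card = U.card := by
    rw [hU₁, hU₂]
    exact Finset.card_filter_add_card_filter_not _
  have hT'card : T'.card + 1 = T.card := by
    rw [hT']
    rw [Finset.card_erase_of_mem hfT]
    have : 1 ≤ T.card := Finset.card_pos.2 ⟨_, hfT⟩
    omega
  omega


/-- A pseudoforest with all edges inside `U` has at most `|U|` edges. -/
lemma card_le_pseudo [DecidableEq V] :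
    ∀ (n : ℕ) (P : Finset (Sym2 V)) (U : Finset V), U.card = n →
    IsPseudoforestSet (P : Set (Sym2 V)) →
    (∀ f ∈ P, ¬ f.IsDiag) →
    (∀ f ∈ P, ∀ v ∈ f, v ∈ U) →
    P.card ≤ U.card := by
  intro n
  induction n using Nat.strong_induction_on with
  | _ n IH =>
  intro P U hcard hps hnd hin
  rcases U.eq_empty_or_nonempty with rfl | ⟨u₀, hu₀⟩
  · rcases P.eq_empty_or_nonempty with rfl | ⟨f, hfP⟩
    · simp
    · obtain ⟨a, b, rfl⟩ := sym2_exists f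
      exact absurd (hin _ hfP a (Sym2.mem_mk_left a b)) (by simp)
  set S : Set V := {v | (fromEdgeSet (P : Set (Sym2 V))).Reachable u₀ v} with hS
  set Sc : Set V := {v | v ∉ S} with hSc
  by_cases hU2 : ∃ v ∈ U, v ∉ S
  · -- disconnected case: split
    obtain ⟨v₁, hv₁U, hv₁S⟩ := hU2
    set P₁ : Finset (Sym2 V) := P.filter (fun g => ∀ x ∈ g, x ∈ S) with hP₁
    set P₂ : Finset (Sym2 V) := P.filter (fun g => ∀ x ∈ g, x ∈ Sc) with hP₂
    set U₁ : Finset V := U.filter (fun v => v ∈ S) with hU₁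
    set U₂ : Finset V := U.filter (fun v => ¬ v ∈ S) with hU₂
    have hcl : ∀ a b : V, (fromEdgeSet (P : Set (Sym2 V))).Adj a b → (a ∈ S ↔ b ∈ S) :=
      fun a b hab => ⟨fun ha => ha.trans hab.reachable, fun hb => hb.trans hab.symm.reachable⟩
    have h1 : P₁.card ≤ U₁.card := by
      refine IH U₁.card ?_ P₁ U₁ rfl
        (pseudo_subset (Finset.coe_subset.2 (Finset.filter_subset _ _)) hps) ?_ ?_
      · calc U₁.card ≤ (U.erase v₁).card :=
            Finset.card_le_card (by
              intro x hx
              rw [hU₁, Finset.mem_filter] at hx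
              rw [Finset.mem_erase]
              exact ⟨fun h => hv₁S (h ▸ hx.2), hx.1⟩)
          _ < U.card := Finset.card_erase_lt_of_mem hv₁U
          _ = n := hcard
      · intro g hg
        exact hnd g (Finset.filter_subset _ _ hg)
      · intro g hg x hx
        rw [hP₁, Finset.mem_filter] at hg
        rw [hU₁, Finset.mem_filter]
        exact ⟨hin g hg.1 x hx, hg.2 x hx⟩
    have h2 : P₂.card ≤ U₂.card := by
      refine IH U₂.card ?_ P₂ U₂ rfl
        (pseudo_subset (Finset.coe_subset.2 (Finset.filter_subset _ _)) hps) ?_ ?_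
      · calc U₂.card ≤ (U.erase u₀).card :=
            Finset.card_le_card (by
              intro x hx
              rw [hU₂, Finset.mem_filter] at hx
              rw [Finset.mem_erase]
              refine ⟨fun h => hx.2 (h ▸ (Reachable.refl _ : u₀ ∈ S)), hx.1⟩)
          _ < U.card := Finset.card_erase_lt_of_mem hu₀
          _ = n := hcard
      · intro g hg
        exact hnd g (Finset.filter_subset _ _ hg)
      · intro g hg x hx
        rw [hP₂, Finset.mem_filter] at hg
        rw [hU₂, Finset.mem_filter]
        exact ⟨hin g hg.1 x hx, hg.2 x hx⟩
    have hsplit : P₂ = P.filter (fun g => ¬ (∀ x ∈ g, x ∈ S)) := by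
      ext g
      rw [hP₂, Finset.mem_filter, Finset.mem_filter]
      constructor
      · rintro ⟨hg, hall⟩
        refine ⟨hg, fun hall' => ?_⟩
        obtain ⟨a, b, rfl⟩ := sym2_exists g
        exact hall a (Sym2.mem_mk_left a b) (hall' a (Sym2.mem_mk_left a b))
      · rintro ⟨hg, hnall⟩
        refine ⟨hg, ?_⟩
        obtain ⟨a, b, rfl⟩ := sym2_exists g
        have hab : a ≠ b := fun h => hnd _ hg (Sym2.mk_isDiag_iff.2 h)
        have hadj' : (fromEdgeSet (P : Set (Sym2 V))).Adj a b := (fromEdgeSet_adj _).2 ⟨hg, hab⟩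
        have hiff := hcl a b hadj'
        have hna : a ∉ S := by
          intro haS
          refine hnall ?_
          intro x hx
          rw [Sym2.mem_iff] at hx
          rcases hx with rfl | rfl
          exacts [haS, hiff.1 haS]
        intro x hx
        rw [Sym2.mem_iff] at hx
        rcases hx with rfl | rfl
        · exact hna
        · exact fun hbS => hna (hiff.2 hbS)
    have hcards : P₁.card + P₂.card = P.card := by
      rw [hsplit, hP₁]
      exact Finset.card_filter_add_card_filter_not _
    have hUcards : U₁.card + U₂.card = U.card := by
      rw [hU₁, hU₂]
      exact Finset.card_filter_add_card_filter_not _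
    omega
  · -- connected case
    push_neg at hU2
    by_cases hac : (fromEdgeSet (P : Set (Sym2 V))).IsAcyclic
    · have := card_le_acyclic P.card P U u₀ rfl hac hnd hin hu₀ (fun v hv => hU2 v hv)
      omega
    · -- there is a cycle; delete one of its edges
      simp only [IsAcyclic, not_forall] at hac
      obtain ⟨w, c, hc⟩ := hac
      rw [not_not] at hc
      have hlen : 3 ≤ c.length := hc.three_le_length
      have hedne : c.edges ≠ [] := by
        intro h
        have := c.length_edges
        rw [h] at this
        simp at this
        omega
      obtain ⟨f₀, hf₀⟩ := List.exists_mem_of_ne_nil _ hedne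
      have hf₀P : f₀ ∈ P := by
        have := c.edges_subset_edgeSet hf₀
        rw [edgeSet_fromEdgeSet] at this
        exact this.1
      obtain ⟨γ, δ, hγδeq⟩ := sym2_exists f₀
      have hγδ : γ ≠ δ := by
        intro h
        exact hnd _ hf₀P (hγδeq ▸ Sym2.mk_isDiag_iff.2 h)
      -- the erased graph is acyclic
      have hwU : w ∈ U := by
        cases c with
        | nil => simp at hlen
        | cons h q =>
          rw [fromEdgeSet_adj] at h
          exact hin _ h.1 w (Sym2.mem_mk_left _ _)
      have hac' : (fromEdgeSet ((P.erase f₀ : Finset (Sym2 V)) : Set (Sym2 V))).IsAcyclic := by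
        intro v d hd
        have hE : ∀ g ∈ d.edges, g ∈ (fromEdgeSet (P : Set (Sym2 V))).edgeSet := by
          intro g hg
          have := d.edges_subset_edgeSet hg
          rw [edgeSet_fromEdgeSet] at this ⊢
          exact ⟨Finset.coe_subset.2 (Finset.erase_subset _ _) this.1, this.2⟩
        have hvU : v ∈ U := by
          cases d with
          | nil => exact absurd hd.three_le_length (by simp)
          | cons h q =>
            rw [fromEdgeSet_adj] at h
            have : _ ∈ (P.erase f₀ : Finset (Sym2 V)) := h.1
            exact hin _ (Finset.erase_subset _ _ this) v (Sym2.mem_mk_left _ _)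
        have hreach : (fromEdgeSet (P : Set (Sym2 V))).Reachable w v :=
          (hU2 w hwU).symm.trans (hU2 v hvU)
        have hiff := hps c (d.transfer _ hE) hc (hd.transfer hE) hreach f₀
        have : f₀ ∈ (d.transfer _ hE).edges := hiff.1 hf₀
        rw [Walk.edges_transfer] at this
        have := d.edges_subset_edgeSet this
        rw [edgeSet_fromEdgeSet] at this
        have h1 := this.1
        rw [Finset.mem_coe, Finset.mem_erase] at h1
        exact h1.1 rfl
      -- connectivity is preserved
      have hbridge : ¬ (fromEdgeSet (P : Set (Sym2 V))).IsBridge f₀ := by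
        rw [isBridge_iff_mem_and_forall_cycle_notMem (c.edges_subset_edgeSet hf₀)]
        push_neg
        exact ⟨w, c, hc, hf₀⟩
      have hle2 : (fromEdgeSet (P : Set (Sym2 V)) \ fromEdgeSet {f₀}) ≤
          fromEdgeSet ((P.erase f₀ : Finset (Sym2 V)) : Set (Sym2 V)) := by
        intro x y hxy
        rcases hxy with ⟨hxy1, hxy2⟩
        rw [fromEdgeSet_adj] at hxy1 ⊢
        refine ⟨?_, hxy1.2⟩
        rw [Finset.mem_coe, Finset.mem_erase]
        refine ⟨?_, hxy1.1⟩
        intro h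
        exact hxy2 ((fromEdgeSet_adj _).2 ⟨h ▸ rfl, hxy1.2⟩)
      have hγδreach : (fromEdgeSet ((P.erase f₀ : Finset (Sym2 V)) : Set (Sym2 V))).Reachable γ δ := by
        have : ¬ ((fromEdgeSet (P : Set (Sym2 V))).Adj γ δ ∧
            ¬ (fromEdgeSet (P : Set (Sym2 V)) \ fromEdgeSet {s(γ, δ)}).Reachable γ δ) := by
          rintro ⟨-, hnr⟩
          rw [hγδeq] at hbridge
          exact hbridge (isBridge_iff.mpr hnr)
        push_neg at this
        have hadjγδ : (fromEdgeSet (P : Set (Sym2 V))).Adj γ δ :=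
          (fromEdgeSet_adj _).2 ⟨hγδeq ▸ hf₀P, hγδ⟩
        have := this hadjγδ
        exact this.mono (hγδeq ▸ hle2)
      have hconn' : ∀ v ∈ U, (fromEdgeSet ((P.erase f₀ : Finset (Sym2 V)) : Set (Sym2 V))).Reachable u₀ v := by
        intro v hv
        refine reach_of_edges_reach ?_ (hU2 v hv)
        intro a b hab
        by_cases he : s(a, b) = f₀
        · rw [hγδeq, Sym2.eq_iff] at he
          rcases he with ⟨rfl, rfl⟩ | ⟨rfl, rfl⟩
          · exact hγδreach
          · exact hγδreach.symm
        · rw [fromEdgeSet_adj] at hab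
          refine Adj.reachable ?_
          rw [fromEdgeSet_adj]
          refine ⟨?_, hab.2⟩
          rw [Finset.mem_coe, Finset.mem_erase]
          exact ⟨he, hab.1⟩
      have := card_le_acyclic (P.erase f₀).card (P.erase f₀) U u₀ rfl hac'
        (fun g hg => hnd g (Finset.erase_subset _ _ hg))
        (fun g hg x hx => hin g (Finset.erase_subset _ _ hg) x hx) hu₀ hconn'
      rw [Finset.card_erase_of_mem hf₀P] at this
      have : 1 ≤ P.card := Finset.card_pos.2 ⟨_, hf₀P⟩
      omega


lemma filter_eq_single_length {l : List (Sym2 V)} (p : Sym2 V → Prop) (hnd : l.Nodup)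
    {x : Sym2 V} (hx : x ∈ l) (hpx : p x) (hall : ∀ f ∈ l, p f → f = x) :
    (l.filter (fun f => p f)).length = 1 := by
  classical
  have hmem : x ∈ l.filter (fun f => p f) := by
    rw [List.mem_filter]
    exact ⟨hx, by simpa using hpx⟩
  have hnd' : (l.filter (fun f => p f)).Nodup := hnd.filter _
  have hall' : ∀ f ∈ l.filter (fun f => p f), f = x := by
    intro f hf
    rw [List.mem_filter] at hf
    exact hall f hf.1 (by simpa using hf.2)
  rcases hl : l.filter (fun f => p f) with _ | ⟨a, _ | ⟨b, t⟩⟩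
  · rw [hl] at hmem; simp at hmem
  · rfl
  · rw [hl] at hnd' hall'
    have ha := hall' a (by simp)
    have hb := hall' b (by simp)
    subst ha
    rw [List.nodup_cons] at hnd'
    exact absurd (by simp [hb] : a ∈ b :: t) hnd'.1

lemma single_cross_closed {G : SimpleGraph V} (S : Set V) {u : V} (w : G.Walk u u)
    (hnd : w.edges.Nodup) {f0 : Sym2 V} (hf0 : f0 ∈ w.edges) (hc : cross S f0)
    (hall : ∀ f ∈ w.edges, cross S f → f = f0) : False := by
  have h1 : Even ((w.edges.filter (fun f => cross S f)).length) :=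
    (parity_walk S w).2 Iff.rfl
  rw [filter_eq_single_length (cross S) hnd hf0 hc hall] at h1
  simp at h1

lemma single_cross_path {G : SimpleGraph V} (S : Set V) {a b : V} (w : G.Walk a b)
    (hnd : w.edges.Nodup) {x : Sym2 V} (hx : x ∈ w.edges) (hcx : cross S x)
    (hall : ∀ f ∈ w.edges, cross S f → f = x) : Xor' (a ∈ S) (b ∈ S) := by
  have h1 := (parity_walk S w)
  rw [filter_eq_single_length (cross S) hnd hx hcx hall] at h1
  simp only [Nat.not_even_one, false_iff] at h1
  simp only [Xor']
  tauto

section Der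

variable {k : ℕ}

/-- derivability of an edge from `e` by repeatedly taking forest paths between
endpoints of derived edges. -/
inductive Der (F : Fin k → Set (Sym2 V)) (e : Sym2 V) : Sym2 V → ℕ → Prop
  | base : Der F e e 0
  | step {f g : Sym2 V} {d : ℕ} (i : Fin k) {a b : V}
      (hf : Der F e f d) (hab : f = s(a, b))
      (w : (fromEdgeSet (F i)).Walk a b) (hw : w.IsPath) (hg : g ∈ w.edges) :
      Der F e g (d + 1)

/-- derivation depth -/
noncomputable def dep (F : Fin k → Set (Sym2 V)) (e : Sym2 V) (g : Sym2 V) : ℕ :=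
  sInf {d | Der F e g d}

lemma der_dep {F : Fin k → Set (Sym2 V)} {e g : Sym2 V} {d : ℕ} (h : Der F e g d) :
    Der F e g (dep F e g) :=
  Nat.sInf_mem (⟨d, h⟩ : {d | Der F e g d}.Nonempty)

lemma dep_le {F : Fin k → Set (Sym2 V)} {e g : Sym2 V} {d : ℕ} (h : Der F e g d) :
    dep F e g ≤ d :=
  Nat.sInf_le h

lemma der_zero {F : Fin k → Set (Sym2 V)} {e g : Sym2 V} (h : Der F e g 0) : g = e := by
  cases h
  rfl

/-- the link relation: `f` spans a forest path through `g` -/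
def Link (F : Fin k → Set (Sym2 V)) (f g : Sym2 V) : Prop :=
  ∃ (i : Fin k) (a b : V) (w : (fromEdgeSet (F i)).Walk a b),
    f = s(a, b) ∧ w.IsPath ∧ g ∈ w.edges

lemma der_parent {F : Fin k → Set (Sym2 V)} {e g : Sym2 V} {t : ℕ}
    (hg : Der F e g t) (hdep : dep F e g = t) (ht : t ≠ 0) :
    ∃ f, (Der F e f (t - 1) ∧ dep F e f = t - 1) ∧ Link F f g := by
  cases hg with
  | base => exact absurd rfl ht
  | @step f g d i a b hf hab w hw hgmem =>
    have hf' : Der F e f (dep F e f) := der_dep hf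
    have hder : Der F e g (dep F e f + 1) := Der.step i hf' hab w hw hgmem
    have h1 : dep F e g ≤ dep F e f + 1 := dep_le hder
    have h2 : dep F e f ≤ d := dep_le hf
    have heq : dep F e f = d := by omega
    refine ⟨f, ⟨by rw [Nat.add_sub_cancel]; rw [← heq]; exact hf', by omega⟩, ?_⟩
    exact ⟨i, a, b, w, hab, hw, hgmem⟩

end Der


lemma claim1 [Fintype V] [DecidableEq V] {k : ℕ} (G : SimpleGraph V)
    (φ : Sym2 V → Option (Fin k))
    (hsupp : ∀ f, φ f ≠ none → f ∈ G.edgeSet)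
    (hforest : ∀ i, IsForestSet {f | φ f = some i})
    (hmax : ∀ ψ : Sym2 V → Option (Fin k), (∀ f, ψ f ≠ none → f ∈ G.edgeSet) →
      (∀ i, IsForestSet {f | ψ f = some i}) →
      ((Finset.univ : Finset (Sym2 V)).filter (fun f => ψ f ≠ none)).card ≤
        ((Finset.univ : Finset (Sym2 V)).filter (fun f => φ f ≠ none)).card)
    (e : Sym2 V) (he : e ∈ G.edgeSet) (hnone : φ e = none) :
    ∀ g dd, Der (fun i => {f | φ f = some i}) e g dd →
      ∀ (i : Fin k) (a b : V), g = s(a, b) →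
        (fromEdgeSet {f | φ f = some i}).Reachable a b := by
  set Fc : Fin k → Set (Sym2 V) := fun i => {f | φ f = some i} with hFc
  have hFcmem : ∀ i f, f ∈ Fc i ↔ φ f = some i := fun i f => Iff.rfl
  have der_memE : ∀ g dd, Der Fc e g dd → g ∈ G.edgeSet := by
    intro g dd hD
    induction hD with
    | base => exact he
    | step i hf hab w hw hg ih =>
      have hmem := w.edges_subset_edgeSet hg
      rw [edgeSet_fromEdgeSet] at hmem
      exact hsupp _ (by rw [(hFcmem _ _).1 hmem.1]; simp)
  by_contra hbad
  push_neg at hbad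
  obtain ⟨g₁, d₁, hD₁, i₁, a₁, b₁, hg₁, hnr₁⟩ := hbad
  set BadD : Set ℕ := {d | ∃ (g : Sym2 V) (i : Fin k) (a b : V),
    Der Fc e g d ∧ dep Fc e g = d ∧ g = s(a, b) ∧
      ¬ (fromEdgeSet (Fc i)).Reachable a b} with hBadD
  have hBadne : BadD.Nonempty :=
    ⟨dep Fc e g₁, g₁, i₁, a₁, b₁, der_dep hD₁, rfl, hg₁, hnr₁⟩
  set m := sInf BadD with hm
  obtain ⟨gs, istar, as, bs, hDgs, hdepgs, hgs_eq, hnr⟩ := Nat.sInf_mem hBadne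
  have hmin : ∀ (g' : Sym2 V) (d' : ℕ) (i' : Fin k) (a' b' : V), Der Fc e g' d' → d' < m →
      g' = s(a', b') → (fromEdgeSet (Fc i')).Reachable a' b' := by
    intro g' d' i' a' b' hD' hlt heq
    by_contra hnr'
    have hmem : dep Fc e g' ∈ BadD := ⟨g', i', a', b', der_dep hD', rfl, heq, hnr'⟩
    have h1 := Nat.sInf_le hmem
    have h2 := dep_le hD'
    omega
  classical
  -- chain construction
  set CC : ℕ → Type _ := fun r => {q : Sym2 V × Sym2 V //
    (r ≤ m → Der Fc e q.1 (m - r) ∧ dep Fc e q.1 = m - r) ∧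
    (1 ≤ r → r ≤ m → Link Fc q.1 q.2)} with hCC
  have parentEx : ∀ r : ℕ, r + 1 ≤ m → ∀ g : Sym2 V, Der Fc e g (m - r) → dep Fc e g = m - r →
      ∃ f, (Der Fc e f (m - (r+1)) ∧ dep Fc e f = m - (r+1)) ∧ Link Fc f g := by
    intro r hr g h1 h2
    obtain ⟨f, hf1, hf2⟩ := der_parent h1 h2 (by omega)
    have heq : m - r - 1 = m - (r + 1) := by omega
    exact ⟨f, ⟨heq ▸ hf1.1, by omega⟩, hf2⟩
  set c0 : CC 0 := ⟨(gs, gs), by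
    constructor
    · intro _
      rw [Nat.sub_zero]
      exact ⟨hDgs, hdepgs⟩
    · intro h _
      exact absurd h (by omega)⟩ with hc0
  set cstep : ∀ r, CC r → CC (r + 1) := fun r prev =>
    dite (r + 1 ≤ m)
      (fun hr =>
        ⟨(Classical.choose (parentEx r hr prev.1.1 (prev.2.1 (by omega)).1
            (prev.2.1 (by omega)).2), prev.1.1),
         fun _ => (Classical.choose_spec (parentEx r hr prev.1.1 (prev.2.1 (by omega)).1
            (prev.2.1 (by omega)).2)).1,
         fun _ _ => (Classical.choose_spec (parentEx r hr prev.1.1 (prev.2.1 (by omega)).1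
            (prev.2.1 (by omega)).2)).2⟩)
      (fun hr => ⟨(prev.1.1, prev.1.1), fun h => absurd h hr, fun _ h => absurd h hr⟩)
    with hcstep
  set cc : ∀ r, CC r := fun r => Nat.rec c0 cstep r with hcc
  set dch : ℕ → Sym2 V := fun r => (cc r).1.1 with hdch
  have hdDer : ∀ r, r ≤ m → Der Fc e (dch r) (m - r) ∧ dep Fc e (dch r) = m - r :=
    fun r hr => (cc r).2.1 hr
  have hprev : ∀ r, (cc (r + 1)).1.2 = dch r := by
    intro r
    show (cstep r (cc r)).1.2 = (cc r).1.1
    rw [hcstep]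
    by_cases hr : r + 1 ≤ m
    · simp only [dif_pos hr]
    · simp only [dif_neg hr]
  have hLink : ∀ r, 1 ≤ r → r ≤ m → Link Fc (dch r) (dch (r - 1)) := by
    intro r h1 h2
    obtain ⟨r', rfl⟩ : ∃ r', r = r' + 1 := ⟨r - 1, by omega⟩
    have hl := (cc (r' + 1)).2.2 h1 h2
    rw [hprev r'] at hl
    have : r' + 1 - 1 = r' := by omega
    rw [this]
    exact hl
  have hd0 : dch 0 = gs := rfl
  have hdinj : ∀ r r', r ≤ m → r' ≤ m → dch r = dch r' → r = r' := by
    intro r r' hr hr' heq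
    have h1 := (hdDer r hr).2
    have h2 := (hdDer r' hr').2
    rw [heq] at h1
    omega
  have hdm : dch m = e := by
    have := (hdDer m le_rfl).1
    rw [Nat.sub_self] at this
    exact der_zero this
  -- colors
  set J : ℕ → Fin k := fun r =>
    if h : 1 ≤ r ∧ r ≤ m then Classical.choose (hLink r h.1 h.2) else istar with hJ
  set colr : ℕ → Fin k := fun r => if r = 0 then istar else J r with hcolr
  have hJspec : ∀ r (h1 : 1 ≤ r) (h2 : r ≤ m),
      ∃ (a b : V) (w : (fromEdgeSet (Fc (J r))).Walk a b),
        dch r = s(a, b) ∧ w.IsPath ∧ dch (r - 1) ∈ w.edges := by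
    intro r h1 h2
    have hJr : J r = Classical.choose (hLink r h1 h2) := by
      rw [hJ]
      exact dif_pos ⟨h1, h2⟩
    rw [hJr]
    exact Classical.choose_spec (hLink r h1 h2)
  set φ' : Sym2 V → Option (Fin k) := fun f =>
    if h : ∃ r, r ≤ m ∧ dch r = f then some (colr (Classical.choose h)) else φ f with hφ'
  have hφ'img : ∀ r, r ≤ m → φ' (dch r) = some (colr r) := by
    intro r hr
    have hex : ∃ r', r' ≤ m ∧ dch r' = dch r := ⟨r, hr, rfl⟩
    have h1 : φ' (dch r) = some (colr (Classical.choose hex)) := by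
      rw [hφ']
      exact dif_pos hex
    have hspec := Classical.choose_spec hex
    rw [h1, hdinj _ _ hspec.1 hr hspec.2]
  have hφ'other : ∀ f, (¬ ∃ r, r ≤ m ∧ dch r = f) → φ' f = φ f := by
    intro f hf
    rw [hφ']
    exact dif_neg hf
  -- new classes are forests
  have hNforest : ∀ i₀ : Fin k, IsForestSet {f | φ' f = some i₀} := by
    intro i₀ u D hD
    have hDedge : ∀ f ∈ D.edges, φ' f = some i₀ ∧ ¬ f.IsDiag := by
      intro f hf
      have hmem := D.edges_subset_edgeSet hf
      rw [edgeSet_fromEdgeSet] at hmem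
      exact ⟨hmem.1, hmem.2⟩
    have hDnodup : D.edges.Nodup := hD.isCircuit.isTrail.edges_nodup
    by_cases hIdx : ∃ r, r ≤ m ∧ dch r ∈ D.edges ∧ colr r = i₀
    · -- an added edge lies on the cycle
      set Idx : Set ℕ := {r | r ≤ m ∧ dch r ∈ D.edges ∧ colr r = i₀} with hIdxS
      set r₀ := sInf Idx with hr₀def
      have hr₀mem : r₀ ∈ Idx := Nat.sInf_mem hIdx
      obtain ⟨hr₀m, hyD, hcol₀⟩ := hr₀mem
      by_cases hr0 : r₀ = 0
      · -- the added edge is the uncolorable edge gs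
        have hcoli : istar = i₀ := by
          rw [hr0] at hcol₀
          rw [hcolr] at hcol₀
          simpa using hcol₀
        subst hcoli
        set S : Set V := {v | (fromEdgeSet (Fc istar)).Reachable as v} with hSdef
        have hyD0 : gs ∈ D.edges := by
          rw [← hd0, ← hr0]
          exact hyD
        rw [hgs_eq] at hyD0
        refine single_cross_closed S D hDnodup hyD0 ?_ ?_
        · rw [cross_mk]
          exact Or.inl ⟨Reachable.refl _, hnr⟩
        · intro f hfD hcf
          by_contra hfy
          obtain ⟨x₁, x₂, hfeq⟩ := sym2_exists f
          have hreach : (fromEdgeSet (Fc istar)).Reachable x₁ x₂ := by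
            by_cases hfimg : ∃ r, r ≤ m ∧ dch r = f
            · obtain ⟨r, hrm, hrf⟩ := hfimg
              have hr1 : 1 ≤ r := by
                rcases Nat.eq_zero_or_pos r with rfl | h
                · exact absurd (by rw [← hrf, hd0, hgs_eq]) hfy
                · exact h
              exact hmin f (m - r) istar x₁ x₂ ((hrf ▸ (hdDer r hrm).1)) (by omega) hfeq
            · have hφf : φ f = some istar := by
                rw [← hφ'other f hfimg]
                exact (hDedge f hfD).1
              have hne : x₁ ≠ x₂ := fun h => (hDedge f hfD).2 (hfeq ▸ Sym2.mk_isDiag_iff.2 h)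
              exact Adj.reachable ((fromEdgeSet_adj _).2 ⟨(hFcmem _ _).2 (hfeq ▸ hφf), hne⟩)
          rw [hfeq] at hcf
          exact (not_cross_of_reach hreach) hcf
      · -- r₀ ≥ 1 : swap situation with a removed edge
        have hr01 : 1 ≤ r₀ := by omega
        have hJr₀ : J r₀ = i₀ := by
          rw [hcolr] at hcol₀
          simpa [hr0] using hcol₀
        have hspec := hJspec r₀ hr01 hr₀m
        rw [hJr₀] at hspec
        obtain ⟨a, b, w, hyeq, hwp, hxw⟩ := hspec
        set x := dch (r₀ - 1) with hxdef
        have hxFc : x ∈ Fc i₀ ∧ ¬ x.IsDiag := by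
          have hmem := w.edges_subset_edgeSet hxw
          rw [edgeSet_fromEdgeSet] at hmem
          exact ⟨hmem.1, hmem.2⟩
        obtain ⟨α, β, hxeq⟩ := sym2_exists x
        have hαβ : α ≠ β := fun h => hxFc.2 (hxeq ▸ Sym2.mk_isDiag_iff.2 h)
        set S : Set V := {v | (fromEdgeSet (Fc i₀ \ {x})).Reachable α v} with hSdef
        have hdel_le : fromEdgeSet (Fc i₀ \ {x}) ≤
            fromEdgeSet (Fc i₀) \ fromEdgeSet {s(α, β)} := by
          intro u₁ u₂ hu
          rw [fromEdgeSet_adj] at hu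
          refine ⟨(fromEdgeSet_adj _).2 ⟨hu.1.1, hu.2⟩, ?_⟩
          rw [fromEdgeSet_adj]
          rintro ⟨hmm, -⟩
          rw [Set.mem_singleton_iff] at hmm
          exact hu.1.2 (by rw [hmm, ← hxeq]; exact rfl)
        have hbridge : ¬ (fromEdgeSet (Fc i₀ \ {x})).Reachable α β := by
          have hisb : (fromEdgeSet (Fc i₀)).IsBridge s(α, β) :=
            isAcyclic_iff_forall_edge_isBridge.mp (hforest i₀)
              (by rw [mem_edgeSet]; exact (fromEdgeSet_adj _).2 ⟨hxeq ▸ hxFc.1, hαβ⟩)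
          have hnb := isBridge_iff.mp hisb
          intro hre
          exact hnb (hre.mono hdel_le)
        have hxnotD : x ∉ D.edges := by
          intro hxD
          have h1 := (hDedge x hxD).1
          rw [hxdef] at h1
          rw [hφ'img (r₀ - 1) (by omega)] at h1
          have hc1 : colr (r₀ - 1) = i₀ := Option.some.inj h1
          have hmem : (r₀ - 1) ∈ Idx := ⟨by omega, hxdef ▸ hxD, hc1⟩
          have := Nat.sInf_le hmem
          omega
        have hcrossx : cross S x := by
          rw [hxeq, cross_mk]
          exact Or.inl ⟨Reachable.refl _, hbridge⟩
        have hwother : ∀ f ∈ w.edges, cross S f → f = x := by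
          intro f hfw hcf
          by_contra hfx
          obtain ⟨u₁, u₂, hfeq⟩ := sym2_exists f
          have hfFc := w.edges_subset_edgeSet hfw
          rw [edgeSet_fromEdgeSet] at hfFc
          have hne : u₁ ≠ u₂ := fun h => hfFc.2 (hfeq ▸ Sym2.mk_isDiag_iff.2 h)
          have hadj : (fromEdgeSet (Fc i₀ \ {x})).Adj u₁ u₂ :=
            (fromEdgeSet_adj _).2 ⟨⟨hfeq ▸ hfFc.1, fun hmem => hfx (by
              rw [Set.mem_singleton_iff] at hmem
              rw [← hfeq] at hmem
              exact hmem)⟩, hne⟩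
          rw [hfeq] at hcf
          exact (not_cross_of_reach hadj.reachable) hcf
        have hcrossy : cross S (dch r₀) := by
          rw [hyeq, cross_mk]
          exact single_cross_path S w hwp.isTrail.edges_nodup hxw hcrossx hwother
        refine single_cross_closed S D hDnodup hyD hcrossy ?_
        intro f hfD hcf
        by_contra hfy
        obtain ⟨u₁, u₂, hfeq⟩ := sym2_exists f
        have hne : u₁ ≠ u₂ := fun h => (hDedge f hfD).2 (hfeq ▸ Sym2.mk_isDiag_iff.2 h)
        by_cases hfimg : ∃ r, r ≤ m ∧ dch r = f
        · obtain ⟨r, hrm, hrf⟩ := hfimg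
          have hcolr_i : colr r = i₀ := by
            have h1 := (hDedge f hfD).1
            rw [← hrf, hφ'img r hrm] at h1
            exact Option.some.inj h1
          have hrIdx : r ∈ Idx := ⟨hrm, hrf ▸ hfD, hcolr_i⟩
          have hrr₀ : r₀ ≤ r := Nat.sInf_le hrIdx
          have hrgt : r₀ < r := by
            rcases eq_or_lt_of_le hrr₀ with h | h
            · exact absurd (by rw [← h] at hrf; exact hrf.symm) hfy
            · exact h
          have hreach : (fromEdgeSet (Fc i₀)).Reachable u₁ u₂ :=
            hmin f (m - r) i₀ u₁ u₂ (hrf ▸ (hdDer r hrm).1) (by omega) hfeq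
          obtain ⟨q⟩ := hreach
          have hqpath : (q.toPath : (fromEdgeSet (Fc i₀)).Walk u₁ u₂).IsPath := q.toPath.2
          have hxq : x ∉ (q.toPath : (fromEdgeSet (Fc i₀)).Walk u₁ u₂).edges := by
            intro hxq
            have hderf : Der Fc e f (m - r) := hrf ▸ (hdDer r hrm).1
            have hderx : Der Fc e x (m - r + 1) :=
              Der.step i₀ hderf hfeq (q.toPath : (fromEdgeSet (Fc i₀)).Walk u₁ u₂) hqpath hxq
            have h1 := dep_le hderx
            have h2 := (hdDer (r₀ - 1) (by omega)).2
            rw [← hxdef] at h2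
            omega
          have hreach' : (fromEdgeSet (Fc i₀ \ {x})).Reachable u₁ u₂ := by
            refine ⟨(q.toPath : (fromEdgeSet (Fc i₀)).Walk u₁ u₂).transfer _ ?_⟩
            intro g hg
            have hmem := Walk.edges_subset_edgeSet _ hg
            rw [edgeSet_fromEdgeSet] at hmem ⊢
            exact ⟨⟨hmem.1, fun hgx => hxq (by
              rw [Set.mem_singleton_iff] at hgx
              rw [← hgx]
              exact hg)⟩, hmem.2⟩
          rw [hfeq] at hcf
          exact (not_cross_of_reach hreach') hcf
        · have hφf : φ f = some i₀ := by
            rw [← hφ'other f hfimg]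
            exact (hDedge f hfD).1
          have hfnex : f ≠ x := fun h => hfimg ⟨r₀ - 1, by omega, by rw [← hxdef, ← h]⟩
          have hadj : (fromEdgeSet (Fc i₀ \ {x})).Adj u₁ u₂ :=
            (fromEdgeSet_adj _).2 ⟨⟨(hFcmem _ _).2 (hfeq ▸ hφf), fun hmem => hfnex (by
              rw [Set.mem_singleton_iff] at hmem
              rw [← hfeq] at hmem
              exact hmem)⟩, hne⟩
          rw [hfeq] at hcf
          exact (not_cross_of_reach hadj.reachable) hcf
    · -- no added edge on the cycle: it was an old forest cycle
      have hE : ∀ f ∈ D.edges, f ∈ (fromEdgeSet (Fc i₀)).edgeSet := by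
        intro f hf
        rw [edgeSet_fromEdgeSet]
        refine ⟨?_, (hDedge f hf).2⟩
        by_cases hfimg : ∃ r, r ≤ m ∧ dch r = f
        · obtain ⟨r, hrm, hrf⟩ := hfimg
          refine absurd ⟨r, hrm, hrf ▸ hf, ?_⟩ hIdx
          have h1 := (hDedge f hf).1
          rw [← hrf, hφ'img r hrm] at h1
          exact Option.some.inj h1
        · have h1 := (hDedge f hf).1
          rw [hφ'other f hfimg] at h1
          exact (hFcmem _ _).2 h1
      exact hforest i₀ (D.transfer _ hE) (hD.transfer hE)
  -- validity and weight contradiction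
  have hψsupp : ∀ f, φ' f ≠ none → f ∈ G.edgeSet := by
    intro f hf
    by_cases hfimg : ∃ r, r ≤ m ∧ dch r = f
    · obtain ⟨r, hrm, hrf⟩ := hfimg
      exact hrf ▸ der_memE _ _ (hdDer r hrm).1
    · rw [hφ'other f hfimg] at hf
      exact hsupp f hf
  have hwle := hmax φ' hψsupp hNforest
  have hsub : ((Finset.univ : Finset (Sym2 V)).filter (fun f => φ f ≠ none)) ⊂
      ((Finset.univ : Finset (Sym2 V)).filter (fun f => φ' f ≠ none)) := by
    rw [Finset.ssubset_iff_of_subset]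
    · refine ⟨e, ?_, ?_⟩
      · rw [Finset.mem_filter]
        refine ⟨Finset.mem_univ _, ?_⟩
        rw [← hdm, hφ'img m le_rfl]
        simp
      · rw [Finset.mem_filter]
        push_neg
        intro _
        exact hnone
    · intro f hf
      rw [Finset.mem_filter] at hf ⊢
      refine ⟨Finset.mem_univ _, ?_⟩
      by_cases hfimg : ∃ r, r ≤ m ∧ dch r = f
      · obtain ⟨r, hrm, hrf⟩ := hfimg
        rw [← hrf, hφ'img r hrm]
        simp
      · rw [hφ'other f hfimg]
        exact hf.2
  have := Finset.card_lt_card hsub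
  omega


lemma isForestSet_subsingleton {F : Set (Sym2 V)} (h : F.Subsingleton) : IsForestSet F := by
  intro v c hc
  have hlen : 3 ≤ c.length := hc.three_le_length
  have hnd : c.edges.Nodup := hc.isCircuit.isTrail.edges_nodup
  have hlene : c.edges.length = c.length := c.length_edges
  rcases hE : c.edges with _ | ⟨a, _ | ⟨b, t⟩⟩
  · rw [hE] at hlene; simp at hlene; omega
  · rw [hE] at hlene; simp at hlene; omega
  · have hamem : a ∈ c.edges := by rw [hE]; exact List.mem_cons_self
    have hbmem : b ∈ c.edges := by rw [hE]; simp
    have haF : a ∈ F := by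
      have := c.edges_subset_edgeSet hamem
      rw [edgeSet_fromEdgeSet] at this
      exact this.1
    have hbF : b ∈ F := by
      have := c.edges_subset_edgeSet hbmem
      rw [edgeSet_fromEdgeSet] at this
      exact this.1
    rw [hE, List.nodup_cons] at hnd
    exact hnd.1 (by rw [h haF hbF]; simp)

lemma der_mem_edgeSet {k : ℕ} (G : SimpleGraph V) (φ : Sym2 V → Option (Fin k))
    (hsupp : ∀ f, φ f ≠ none → f ∈ G.edgeSet) (e : Sym2 V) (he : e ∈ G.edgeSet) :
    ∀ g dd, Der (fun i => {f | φ f = some i}) e g dd → g ∈ G.edgeSet := by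
  intro g dd hD
  induction hD with
  | base => exact he
  | step i hf hab w hw hg ih =>
    have hmem := w.edges_subset_edgeSet hg
    rw [edgeSet_fromEdgeSet] at hmem
    exact hsupp _ (by rw [(hmem.1 : φ _ = some i)]; simp)

lemma forest_partition_of_pseudo [Fintype V] [DecidableEq V] (G : SimpleGraph V) (p : ℕ)
    (P : Fin p → Set (Sym2 V)) (hP : IsPseudoforestPartition G p P) :
    ∃ F : Fin (p + 1) → Set (Sym2 V), IsForestPartition G (p + 1) F := by
  classical
  obtain ⟨hPpseudo, hPdisj, hPunion⟩ := hP
  set k := p + 1 with hk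
  set W : (Sym2 V → Option (Fin k)) → ℕ := fun ψ =>
    ((Finset.univ : Finset (Sym2 V)).filter (fun f => ψ f ≠ none)).card with hW
  set Valid : (Sym2 V → Option (Fin k)) → Prop := fun ψ =>
    (∀ f, ψ f ≠ none → f ∈ G.edgeSet) ∧ (∀ i, IsForestSet {f | ψ f = some i}) with hValid
  set A : Set ℕ := {n | ∃ ψ, Valid ψ ∧ W ψ = n} with hA
  have hAne : A.Nonempty := by
    refine ⟨W (fun _ => none), (fun _ => none), ⟨by simp, ?_⟩, rfl⟩
    intro i
    refine isForestSet_subsingleton ?_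
    intro x hx
    simp at hx
  have hAbdd : BddAbove A := by
    refine ⟨Fintype.card (Sym2 V), ?_⟩
    rintro n ⟨ψ, -, rfl⟩
    exact le_trans (Finset.card_filter_le _ _) (by simp)
  obtain ⟨φ, hφValid, hφW⟩ := Nat.sSup_mem hAne hAbdd
  have hmax : ∀ ψ, Valid ψ → W ψ ≤ W φ := fun ψ hψ => hφW ▸ le_csSup hAbdd ⟨ψ, hψ, rfl⟩
  have htotal : ∀ f ∈ G.edgeSet, φ f ≠ none := by
    by_contra hcon
    push_neg at hcon
    obtain ⟨e, heE, hnone⟩ := hcon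
    have hcl := claim1 G φ hφValid.1 hφValid.2 (fun ψ h1 h2 => hmax ψ ⟨h1, h2⟩) e heE hnone
    set Fc : Fin k → Set (Sym2 V) := fun i => {f | φ f = some i} with hFc
    set SR : Set (Sym2 V) := {g | ∃ dd, Der Fc e g dd} with hSR
    have heSR : e ∈ SR := ⟨0, Der.base⟩
    obtain ⟨a₀, b₀, he_eq⟩ := sym2_exists e
    have hab₀ : a₀ ≠ b₀ := by
      intro h
      exact G.not_isDiag_of_mem_edgeSet heE (he_eq ▸ Sym2.mk_isDiag_iff.2 h)
    set HR := fromEdgeSet SR with hHR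
    have hSRU : ∀ g, g ∈ SR → ∀ v ∈ g, HR.Reachable a₀ v := by
      intro g hg
      obtain ⟨dd, hder⟩ := hg
      induction hder with
      | base =>
        intro v hv
        rw [he_eq, Sym2.mem_iff] at hv
        have hadj : HR.Adj a₀ b₀ := (fromEdgeSet_adj _).2 ⟨he_eq ▸ heSR, hab₀⟩
        rcases hv with rfl | rfl
        · exact Reachable.refl _
        · exact hadj.reachable
      | @step f g d i a b hf hab w hw hgmem ih =>
        intro v hv
        have hwSR : ∀ g' ∈ w.edges, g' ∈ SR := fun g' hg' => ⟨d + 1, Der.step i hf hab w hw hg'⟩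
        have hwE : ∀ g' ∈ w.edges, g' ∈ HR.edgeSet := by
          intro g' hg'
          have hmem := w.edges_subset_edgeSet hg'
          rw [edgeSet_fromEdgeSet] at hmem
          rw [hHR, edgeSet_fromEdgeSet]
          exact ⟨hwSR g' hg', hmem.2⟩
        have hgw' : g ∈ (w.transfer HR hwE).edges := by
          rw [Walk.edges_transfer]; exact hgmem
        obtain ⟨x₁, x₂, hgeq⟩ := sym2_exists g
        rw [hgeq] at hgw'
        have hsup : v ∈ (w.transfer HR hwE).support := by
          rw [hgeq, Sym2.mem_iff] at hv
          rcases hv with rfl | rfl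
          · exact Walk.fst_mem_support_of_mem_edges _ hgw'
          · exact Walk.snd_mem_support_of_mem_edges _ hgw'
        have hreach_av : HR.Reachable a v := ⟨(w.transfer HR hwE).takeUntil v hsup⟩
        exact (ih a (by rw [hab]; exact Sym2.mem_mk_left a b)).trans hreach_av
    set U : Finset V := Finset.univ.filter (fun v => HR.Reachable a₀ v) with hU
    have ha₀U : a₀ ∈ U := by
      rw [hU, Finset.mem_filter]
      exact ⟨Finset.mem_univ _, Reachable.refl _⟩
    have hb₀U : b₀ ∈ U := by
      rw [hU, Finset.mem_filter]
      exact ⟨Finset.mem_univ _, hSRU e heSR b₀ (by rw [he_eq]; exact Sym2.mem_mk_right a₀ b₀)⟩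
    set Ti : Fin k → Finset (Sym2 V) :=
      fun i => Finset.univ.filter (fun g => g ∈ SR ∧ φ g = some i) with hTi
    have hTiL1 : ∀ i, U.card ≤ (Ti i).card + 1 := by
      intro i
      refine card_le_conn (Ti i) U ?_ a₀ ha₀U ?_
      · intro f hf v hv
        rw [hTi, Finset.mem_filter] at hf
        rw [hU, Finset.mem_filter]
        exact ⟨Finset.mem_univ _, hSRU f hf.2.1 v hv⟩
      · intro v hv
        rw [hU, Finset.mem_filter] at hv
        refine reach_of_edges_reach ?_ hv.2
        intro x y hxy
        rw [hHR, fromEdgeSet_adj] at hxy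
        obtain ⟨hxySR, hxyne⟩ := hxy
        obtain ⟨dd, hder⟩ := hxySR
        have hreach := hcl _ dd hder i x y rfl
        obtain ⟨q⟩ := hreach
        refine ⟨(q.toPath : (fromEdgeSet (Fc i)).Walk x y).transfer _ ?_⟩
        intro g hg
        have hgSR : g ∈ SR :=
          ⟨dd + 1, Der.step i hder rfl (q.toPath : (fromEdgeSet (Fc i)).Walk x y) q.toPath.2 hg⟩
        have hmem := Walk.edges_subset_edgeSet _ hg
        rw [edgeSet_fromEdgeSet] at hmem
        rw [edgeSet_fromEdgeSet]
        refine ⟨?_, hmem.2⟩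
        rw [Finset.coe_filter]
        exact ⟨Finset.mem_univ _, hgSR, hmem.1⟩
    set EU : Finset (Sym2 V) := Finset.univ.filter
      (fun g => g ∈ G.edgeSet ∧ ∀ v ∈ g, v ∈ U) with hEU
    have hTiEU : ∀ i, Ti i ⊆ EU := by
      intro i g hg
      rw [hTi, Finset.mem_filter] at hg
      rw [hEU, Finset.mem_filter]
      refine ⟨Finset.mem_univ _, hφValid.1 g (by rw [hg.2.2]; simp), ?_⟩
      intro v hv
      rw [hU, Finset.mem_filter]
      exact ⟨Finset.mem_univ _, hSRU g hg.2.1 v hv⟩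
    set TT : Finset (Sym2 V) := Finset.univ.biUnion (fun i : Fin k => Ti i) with hTT
    have hTTcard : TT.card = ∑ i, (Ti i).card := by
      rw [hTT]
      refine Finset.card_biUnion ?_
      intro i _ j _ hij
      show Disjoint (Ti i) (Ti j)
      rw [Finset.disjoint_left]
      intro g hgi hgj
      rw [hTi, Finset.mem_filter] at hgi hgj
      rw [hgi.2.2] at hgj
      exact hij (Option.some.inj hgj.2.2)
    have heTT : e ∉ TT := by
      rw [hTT, Finset.mem_biUnion]
      rintro ⟨i, -, hi⟩
      rw [hTi, Finset.mem_filter] at hi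
      rw [hnone] at hi
      exact Option.some_ne_none _ hi.2.2.symm
    have heEU : e ∈ EU := by
      rw [hEU, Finset.mem_filter]
      refine ⟨Finset.mem_univ _, heE, ?_⟩
      intro v hv
      rw [hU, Finset.mem_filter]
      exact ⟨Finset.mem_univ _, hSRU e heSR v hv⟩
    have hlow : ∑ i, (Ti i).card + 1 ≤ EU.card := by
      have hins : insert e TT ⊆ EU := by
        intro g hg
        rw [Finset.mem_insert] at hg
        rcases hg with rfl | hg
        · exact heEU
        · rw [hTT, Finset.mem_biUnion] at hg
          obtain ⟨i, -, hi⟩ := hg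
          exact hTiEU i hi
      have := Finset.card_le_card hins
      rw [Finset.card_insert_of_notMem heTT, hTTcard] at this
      omega
    have hup1 : EU.card ≤ p * U.card := by
      have hsub : EU ⊆ Finset.univ.biUnion
          (fun i : Fin p => EU.filter (fun g => g ∈ P i)) := by
        intro g hg
        have hgE : g ∈ G.edgeSet := by
          rw [hEU, Finset.mem_filter] at hg
          exact hg.2.1
        rw [← hPunion, Set.mem_iUnion] at hgE
        obtain ⟨i, hi⟩ := hgE
        rw [Finset.mem_biUnion]
        exact ⟨i, Finset.mem_univ _, Finset.mem_filter.2 ⟨hg, hi⟩⟩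
      calc EU.card ≤ _ := Finset.card_le_card hsub
        _ ≤ ∑ i : Fin p, (EU.filter (fun g => g ∈ P i)).card := Finset.card_biUnion_le
        _ ≤ ∑ _i : Fin p, U.card := by
            refine Finset.sum_le_sum ?_
            intro i _
            refine card_le_pseudo U.card (EU.filter (fun g => g ∈ P i)) U rfl ?_ ?_ ?_
            · refine pseudo_subset ?_ (hPpseudo i)
              intro g hg
              rw [Finset.mem_coe, Finset.mem_filter] at hg
              exact hg.2
            · intro f hf
              rw [Finset.mem_filter, hEU, Finset.mem_filter] at hf
              exact G.not_isDiag_of_mem_edgeSet hf.1.2.1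
            · intro f hf v hv
              rw [Finset.mem_filter, hEU, Finset.mem_filter] at hf
              exact hf.1.2.2 v hv
        _ = p * U.card := by
            rw [Finset.sum_const, Finset.card_univ, Fintype.card_fin, smul_eq_mul]
    have hup2 : EU.card ≤ U.card * (U.card - 1) := by
      set pf : Sym2 V → Finset V :=
        fun g => Sym2.lift ⟨fun a b => {a, b}, fun a b => Finset.pair_comm a b⟩ g with hpf
      have hpfmk : ∀ a b : V, pf s(a, b) = {a, b} := by
        intro a b
        simp only [hpf]
        exact Sym2.lift_mk _ _ _
      have hmaps : ∀ g ∈ EU, pf g ∈ U.powersetCard 2 := by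
        intro g hg
        rw [hEU, Finset.mem_filter] at hg
        obtain ⟨x₁, x₂, rfl⟩ := sym2_exists g
        have hne : x₁ ≠ x₂ := fun h => G.not_isDiag_of_mem_edgeSet hg.2.1 (Sym2.mk_isDiag_iff.2 h)
        rw [hpfmk, Finset.mem_powersetCard]
        constructor
        · intro y hy
          rw [Finset.mem_insert, Finset.mem_singleton] at hy
          rcases hy with rfl | rfl
          · exact hg.2.2 y (Sym2.mem_mk_left _ _)
          · exact hg.2.2 y (Sym2.mem_mk_right _ _)
        · exact Finset.card_pair hne
      have hinj : Set.InjOn pf EU := by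
        intro g hgmem g' hgmem' heq
        rw [Finset.mem_coe, hEU, Finset.mem_filter] at hgmem hgmem'
        obtain ⟨x₁, x₂, rfl⟩ := sym2_exists g
        obtain ⟨y₁, y₂, rfl⟩ := sym2_exists g'
        have hnex : x₁ ≠ x₂ := fun h => G.not_isDiag_of_mem_edgeSet hgmem.2.1 (Sym2.mk_isDiag_iff.2 h)
        rw [hpfmk, hpfmk] at heq
        have hx₁ : x₁ ∈ ({y₁, y₂} : Finset V) := by
          rw [← heq]; exact Finset.mem_insert_self _ _
        have hx₂ : x₂ ∈ ({y₁, y₂} : Finset V) := by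
          rw [← heq]; simp
        rw [Finset.mem_insert, Finset.mem_singleton] at hx₁ hx₂
        rcases hx₁ with rfl | rfl
        · rcases hx₂ with rfl | rfl
          · exact absurd rfl hnex
          · rfl
        · rcases hx₂ with rfl | rfl
          · exact Sym2.eq_swap
          · exact absurd rfl hnex
      have h1 := Finset.card_le_card_of_injOn pf hmaps hinj
      rw [Finset.card_powersetCard] at h1
      have h2 : U.card.choose 2 ≤ U.card * (U.card - 1) := by
        rw [Nat.choose_two_right]
        exact Nat.div_le_self _ _
      omega
    have hU2 : 2 ≤ U.card := by
      have : ({a₀, b₀} : Finset V) ⊆ U := by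
        intro y hy
        rw [Finset.mem_insert, Finset.mem_singleton] at hy
        rcases hy with rfl | rfl
        exacts [ha₀U, hb₀U]
      have := Finset.card_le_card this
      rw [Finset.card_pair hab₀] at this
      exact this
    have hsum : k * (U.card - 1) + 1 ≤ EU.card := by
      have h1 : (∑ _i : Fin k, (U.card - 1)) ≤ ∑ i, (Ti i).card := by
        refine Finset.sum_le_sum ?_
        intro i _
        have := hTiL1 i
        omega
      have h2 : (∑ _i : Fin k, (U.card - 1)) = k * (U.card - 1) := by
        rw [Finset.sum_const, Finset.card_univ, Fintype.card_fin, smul_eq_mul]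
      omega
    obtain ⟨w, hw⟩ : ∃ w, U.card = w + 2 := ⟨U.card - 2, by omega⟩
    rw [hw] at hsum hup1 hup2
    rw [hk] at hsum
    have hw1 : w + 2 - 1 = w + 1 := by omega
    rw [hw1] at hsum hup2
    have e1 : (p + 1) * (w + 1) + 1 ≤ p * (w + 2) := le_trans hsum hup1
    have e2 : (p + 1) * (w + 1) + 1 ≤ (w + 2) * (w + 1) := le_trans hsum hup2
    nlinarith [e1, e2]
  refine ⟨fun i => {f | φ f = some i}, hφValid.2, ?_, ?_⟩
  · intro i j hij
    rw [Set.disjoint_left]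
    intro f hfi hfj
    rw [Set.mem_setOf_eq] at hfi hfj
    rw [hfi] at hfj
    exact hij (Option.some.inj hfj)
  · ext f
    simp only [Set.mem_iUnion, Set.mem_setOf_eq]
    constructor
    · rintro ⟨i, hi⟩
      exact hφValid.1 f (by rw [hi]; simp)
    · intro hf
      have hne := htotal f hf
      cases hφf : φ f with
      | none => exact absurd hφf hne
      | some i => exact ⟨i, rfl⟩


lemma exists_forest_partition [Fintype V] [DecidableEq V] (G : SimpleGraph V) :
    ∃ (N : ℕ) (F : Fin N → Set (Sym2 V)), IsForestPartition G N F := by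
  classical
  set s : Finset (Sym2 V) := Finset.univ.filter (fun f => f ∈ G.edgeSet) with hs
  refine ⟨s.card, fun i => {(s.equivFin.symm i : Sym2 V)}, ?_, ?_, ?_⟩
  · intro i
    exact isForestSet_subsingleton Set.subsingleton_singleton
  · intro i j hij
    rw [Set.disjoint_left]
    intro f hfi hfj
    rw [Set.mem_singleton_iff] at hfi hfj
    refine hij (s.equivFin.symm.injective (Subtype.ext ?_))
    rw [← hfi, ← hfj]
  · ext f
    simp only [Set.mem_iUnion, Set.mem_singleton_iff]
    constructor
    · rintro ⟨i, rfl⟩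
      exact (Finset.mem_filter.1 (s.equivFin.symm i).2).2
    · intro hf
      refine ⟨s.equivFin ⟨f, ?_⟩, ?_⟩
      · exact Finset.mem_filter.2 ⟨Finset.mem_univ _, hf⟩
      · rw [Equiv.symm_apply_apply]

end NWAux

/-- For every finite simple graph `G`, we have `p(G) ≤ Γ(G) ≤ p(G) + 1`. -/
theorem pseudoarboricity_le_arboricity_le_succ {V : Type*} [Fintype V] [DecidableEq V]
    (G : SimpleGraph V) :
    pseudoarboricity G ≤ arboricity G ∧ arboricity G ≤ pseudoarboricity G + 1 := by
  classical
  obtain ⟨N, FN, hFN⟩ := NWAux.exists_forest_partition G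
  have hconv : ∀ (k : ℕ) (F : Fin k → Set (Sym2 V)),
      IsForestPartition G k F → IsPseudoforestPartition G k F := by
    rintro k F ⟨h1, h2, h3⟩
    refine ⟨fun i => ?_, h2, h3⟩
    intro u v c d hc hd hr f
    exact absurd hc (h1 i c)
  constructor
  · exact csInf_le_csInf (OrderBot.bddBelow _) ⟨N, FN, hFN⟩
      (by rintro k ⟨F, hF⟩; exact ⟨F, hconv k F hF⟩)
  · have hpne : {k | ∃ P : Fin k → Set (Sym2 V), IsPseudoforestPartition G k P}.Nonempty :=
      ⟨N, FN, hconv N FN hFN⟩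
    obtain ⟨P, hP⟩ := Nat.sInf_mem hpne
    obtain ⟨F, hF⟩ := NWAux.forest_partition_of_pseudo G (pseudoarboricity G) P hP
    exact Nat.sInf_le ⟨F, hF⟩
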